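/- arXiv:1007.3706 — 2 statements merged into one kernel-verified Lean document; each statement's English description precedes it below -/
import Mathlib

section
/- Let (z(k))_{k≥0} be a Markov sequence of random variables taking values in a set C, let L : C → ℝ with L⋆ = inf_C L > −∞, suppose L(z(k)) is nonincreasing along every realization, and suppose there is a(ε) > 0 and a measurable set Γ(ε) ⊆ C such that E[L(z(k+1)) | z(k)] − L(z(k)) ≤ −a(ε)·1{z(k) ∈ Γ(ε)} and E[L(z(k+1)) | z(k)] ≤ L(z(k)) always. Then Σ_{k=0}^∞ Prob(z(k) ∈ Γ(ε)) ≤ (L(z(0)) − L⋆)/a(ε), where z(0) is deterministic. -/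
open MeasureTheory in
theorem counting_estimate_drift
    {Ω E : Type*} [MeasurableSpace Ω] [mE : MeasurableSpace E]
    (μ : Measure Ω) [IsProbabilityMeasure μ]
    (z : ℕ → Ω → E) (hz : ∀ k, Measurable (z k))
    (C Γ : Set E) (hΓ : MeasurableSet Γ) (hΓC : Γ ⊆ C)
    (hzC : ∀ k ω, z k ω ∈ C)
    (L : E → ℝ) (Lstar : ℝ) (hLb : ∀ x ∈ C, Lstar ≤ L x)
    (hint : ∀ k, Integrable (fun ω => L (z k ω)) μ)
    (a : ℝ) (ha : 0 < a)
    (hdrift : ∀ k, ∀ᵐ ω ∂μ,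
      (μ[fun ω' => L (z (k + 1) ω') | MeasurableSpace.comap (z k) mE]) ω
        - L (z k ω) ≤ -a * (Γ.indicator (fun _ => (1 : ℝ)) (z k ω)))
    (z0 : E) (hz0 : z0 ∈ C) (hdet : z 0 = fun _ => z0) :
    ∑' k, μ {ω | z k ω ∈ Γ} ≤ ENNReal.ofReal ((L z0 - Lstar) / a) := by
  set m : ℕ → ℝ := fun k => (μ {ω | z k ω ∈ Γ}).toReal with hm
  have hmset : ∀ k, {ω | z k ω ∈ Γ} = z k ⁻¹' Γ := fun k => rfl
  have hmeas : ∀ k, MeasurableSet {ω | z k ω ∈ Γ} := fun k => (hz k) hΓ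
  -- key one-step inequality
  have hstep : ∀ k, ∫ ω, L (z (k + 1) ω) ∂μ ≤ ∫ ω, L (z k ω) ∂μ - a * m k := by
    intro k
    have hle : (MeasurableSpace.comap (z k) mE) ≤ (inferInstance : MeasurableSpace Ω) :=
      (hz k).comap_le
    have hcond : Integrable (μ[fun ω' => L (z (k + 1) ω') | MeasurableSpace.comap (z k) mE]) μ :=
      integrable_condExp
    have hind : Integrable (fun ω => -a * (Γ.indicator (fun _ => (1 : ℝ)) (z k ω))) μ := by
      apply Integrable.const_mul
      have : (fun ω => Γ.indicator (fun _ => (1 : ℝ)) (z k ω))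
          = (z k ⁻¹' Γ).indicator (fun _ => (1 : ℝ)) := by
        ext ω; by_cases h : z k ω ∈ Γ <;>
          simp [Set.indicator, h]
      rw [this]
      exact (integrable_const (1 : ℝ)).indicator (hmeas k)
    have hmono := integral_mono_ae ((hcond.sub (hint k))) hind (hdrift k)
    simp only [Pi.sub_apply] at hmono
    rw [integral_sub hcond (hint k), integral_condExp hle] at hmono
    have hri : ∫ ω, -a * (Γ.indicator (fun _ => (1 : ℝ)) (z k ω)) ∂μ = -a * m k := by
      rw [integral_const_mul]
      congr 1
      have : (fun ω => Γ.indicator (fun _ => (1 : ℝ)) (z k ω))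
          = {ω | z k ω ∈ Γ}.indicator (fun _ => (1 : ℝ)) := by
        ext ω; by_cases h : z k ω ∈ Γ <;> simp [Set.indicator, h]
      rw [this, integral_indicator_const (1 : ℝ) (hmeas k)]
      simp [hm, Measure.real]
    rw [hri] at hmono
    linarith
  -- lower bound for each integral
  have hlow : ∀ k, Lstar ≤ ∫ ω, L (z k ω) ∂μ := by
    intro k
    calc Lstar = ∫ _ : Ω, Lstar ∂μ := by simp
    _ ≤ ∫ ω, L (z k ω) ∂μ :=
      integral_mono (integrable_const _) (hint k) (fun ω => hLb _ (hzC k ω))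
  have h0 : ∫ ω, L (z 0 ω) ∂μ = L z0 := by rw [hdet]; simp
  -- partial sums
  have hpartial : ∀ N, ∑ k ∈ Finset.range N, m k ≤ (L z0 - Lstar) / a := by
    intro N
    have htel : a * ∑ k ∈ Finset.range N, m k ≤ ∫ ω, L (z 0 ω) ∂μ - ∫ ω, L (z N ω) ∂μ := by
      induction N with
      | zero => simp
      | succ n ih =>
        rw [Finset.sum_range_succ, mul_add]
        have := hstep n
        linarith
    rw [h0] at htel
    have := hlow N
    rw [le_div_iff₀ ha]
    nlinarith
  -- finish via tsum
  rw [ENNReal.tsum_eq_iSup_sum]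
  apply iSup_le
  intro s
  obtain ⟨N, hN⟩ : ∃ N, s ⊆ Finset.range N := ⟨s.sup id + 1, fun i hi =>
    Finset.mem_range.mpr (Nat.lt_succ_of_le (Finset.le_sup (f := id) hi))⟩
  calc ∑ k ∈ s, μ {ω | z k ω ∈ Γ}
      ≤ ∑ k ∈ Finset.range N, μ {ω | z k ω ∈ Γ} :=
        Finset.sum_le_sum_of_subset hN
    _ = ENNReal.ofReal (∑ k ∈ Finset.range N, m k) := by
        rw [ENNReal.ofReal_sum_of_nonneg (fun k _ => ENNReal.toReal_nonneg)]
        refine Finset.sum_congr rfl fun k _ => ?_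
        rw [ENNReal.ofReal_toReal (measure_ne_top μ _)]
    _ ≤ ENNReal.ofReal ((L z0 - Lstar) / a) := ENNReal.ofReal_le_ofReal (hpartial N)
end

section
/- Let L(x₁,…,x_S) = Σ_s f_s(x_s) + W(x₁,…,x_S) where each f_s : ℝ^{n_s} → ℝ is convex (possibly nondifferentiable, e.g., a nonnegative multiple of the ℓ₁ norm) and W is convex and continuously differentiable, and let C = C₁ × ⋯ × C_S with each C_s closed and convex. If z ∈ C is block-optimal for L over C (each block z_s minimizes L over C_s with other blocks fixed), then z is a global minimizer of L over C. -/
theorem block_optimal_implies_global_separable_plus_smooth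
    (S : ℕ) (n : Fin S → ℕ)
    (f : ∀ s, EuclideanSpace ℝ (Fin (n s)) → ℝ)
    (hf : ∀ s, ConvexOn ℝ Set.univ (f s))
    (W : (∀ s, EuclideanSpace ℝ (Fin (n s))) → ℝ)
    (hWconv : ConvexOn ℝ Set.univ W)
    (hWsmooth : ContDiff ℝ 1 W)
    (C : ∀ s, Set (EuclideanSpace ℝ (Fin (n s))))
    (hCconv : ∀ s, Convex ℝ (C s)) (hCclosed : ∀ s, IsClosed (C s))
    (z : ∀ s, EuclideanSpace ℝ (Fin (n s))) (hzC : ∀ s, z s ∈ C s)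
    (hblock : ∀ s, ∀ w ∈ C s,
      (∑ s', f s' (z s')) + W z ≤
        (∑ s', f s' (Function.update z s w s')) + W (Function.update z s w)) :
    ∀ y : ∀ s, EuclideanSpace ℝ (Fin (n s)), (∀ s, y s ∈ C s) →
      (∑ s', f s' (z s')) + W z ≤ (∑ s', f s' (y s')) + W y := by
  intro y hy
  have hWdiff : Differentiable ℝ W := hWsmooth.differentiable one_ne_zero
  set D : (∀ s, EuclideanSpace ℝ (Fin (n s))) →L[ℝ] ℝ := fderiv ℝ W z with hDdef
  have hD : HasFDerivAt W D z := (hWdiff z).hasFDerivAt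
  set A : ℝ := ∑ s, (f s (y s) - f s (z s)) with hA
  -- derivative of t ↦ W (z + t • v) at 0 is D v
  have hderiv : ∀ v : ∀ s, EuclideanSpace ℝ (Fin (n s)),
      HasDerivAt (fun t : ℝ => W (z + t • v)) (D v) 0 := by
    intro v
    have hline : HasDerivAt (fun t : ℝ => z + t • v) ((1:ℝ) • v) 0 :=
      ((hasDerivAt_id (0 : ℝ)).smul_const v).const_add z
    rw [one_smul] at hline
    have hD' : HasFDerivAt W D (z + (0:ℝ) • v) := by simpa using hD
    have := hD'.comp_hasDerivAt (0 : ℝ) hline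
    exact this
  have hslope : ∀ v : ∀ s, EuclideanSpace ℝ (Fin (n s)),
      Filter.Tendsto (fun t : ℝ => (W (z + t • v) - W z) / t) (nhdsWithin 0 (Set.Ioi 0))
        (nhds (D v)) := by
    intro v
    have h1 : Filter.Tendsto (slope (fun t : ℝ => W (z + t • v)) 0)
        (nhdsWithin 0 {(0 : ℝ)}ᶜ) (nhds (D v)) :=
      hasDerivAt_iff_tendsto_slope.mp (hderiv v)
    have h2 := h1.mono_left
      (nhdsWithin_mono (0 : ℝ) (fun x hx => ne_of_gt (Set.mem_Ioi.mp hx)))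
    refine h2.congr (fun t => ?_)
    simp [slope_def_field]
  -- the single-block directions
  set v : ∀ s : Fin S, ∀ s', EuclideanSpace ℝ (Fin (n s')) :=
    fun s => Pi.single s (y s - z s) with hv
  have hvsum : ∑ s, v s = y - z := by
    rw [hv]; exact Finset.univ_sum_single (fun s => y s - z s)
  -- key pointwise inequality
  have hkey : ∀ t : ℝ, t ∈ Set.Ioc (0 : ℝ) 1 →
      -A ≤ (∑ s, (W (z + t • v s) - W z)) / t := by
    intro t ht
    obtain ⟨ht0, ht1⟩ := ht
    have hsum : ∀ s : Fin S,
        0 ≤ t * (f s (y s) - f s (z s)) + (W (z + t • v s) - W z) := by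
      intro s
      set w : EuclideanSpace ℝ (Fin (n s)) := z s + t • (y s - z s) with hw
      have hwC : w ∈ C s := by
        have h := hCconv s (hzC s) (hy s) (a := 1 - t) (b := t)
          (by linarith) (le_of_lt ht0) (by ring)
        have hEq : (1 - t) • z s + t • y s = w := by rw [hw]; module
        rwa [hEq] at h
      have hupd : Function.update z s w = z + t • v s := by
        funext s'
        by_cases h : s' = s
        · subst h
          simp [hv, Function.update_self, Pi.single_eq_same, hw]
        · simp [hv, Function.update_of_ne h, Pi.single_eq_of_ne h]
      have hb := hblock s w hwC
      rw [hupd] at hb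
      have hsumupd : ∑ s', f s' (Function.update z s w s')
          = (∑ s', f s' (z s')) - f s (z s) + f s w := by
        have heq : (fun s' => f s' (Function.update z s w s'))
            = Function.update (fun s' => f s' (z s')) s (f s w) := by
          funext s'
          by_cases h : s' = s
          · subst h; simp
          · simp [Function.update_of_ne h]
        calc ∑ s', f s' (Function.update z s w s')
            = ∑ s', Function.update (fun s' => f s' (z s')) s (f s w) s' := by rw [heq]
          _ = f s w + ∑ s' ∈ Finset.univ.erase s, f s' (z s') := by
              rw [Finset.sum_update_of_mem (Finset.mem_univ s)]
              congr 1
              refine Finset.sum_congr ?_ (fun _ _ => rfl)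
              simp [Finset.sdiff_singleton_eq_erase]
          _ = f s w + ((∑ s', f s' (z s')) - f s (z s)) := by
              rw [Finset.sum_erase_eq_sub (Finset.mem_univ s)]
          _ = (∑ s', f s' (z s')) - f s (z s) + f s w := by ring
      rw [← hupd, hsumupd] at hb
      rw [hupd] at hb
      -- convexity of f s
      have hconv : f s w ≤ (1 - t) * f s (z s) + t * f s (y s) := by
        have h := (hf s).2 (Set.mem_univ (z s)) (Set.mem_univ (y s))
          (by linarith : (0:ℝ) ≤ 1 - t) (le_of_lt ht0) (by ring : (1 - t) + t = 1)
        have hEq : (1 - t) • z s + t • y s = w := by rw [hw]; module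
        rw [hEq] at h
        simpa using h
      have : f s (z s) ≤ f s w + (W (z + t • v s) - W z) := by linarith
      linarith [mul_sub t (f s (y s)) (f s (z s)), sub_mul 1 t (f s (z s)),
        one_mul (f s (z s))]
    have hsum' : 0 ≤ t * A + ∑ s, (W (z + t • v s) - W z) := by
      have := Finset.sum_nonneg (s := Finset.univ) (fun s _ => hsum s)
      rw [Finset.sum_add_distrib, ← Finset.mul_sum] at this
      rw [hA]
      linarith
    rw [le_div_iff₀ ht0]
    linarith [hsum', mul_comm A t]
  -- limit of the key quantity
  have htend : Filter.Tendsto (fun t : ℝ => (∑ s, (W (z + t • v s) - W z)) / t)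
      (nhdsWithin 0 (Set.Ioi 0)) (nhds (D (y - z))) := by
    have h1 : Filter.Tendsto (fun t : ℝ => ∑ s, (W (z + t • v s) - W z) / t)
        (nhdsWithin 0 (Set.Ioi 0)) (nhds (∑ s, D (v s))) :=
      tendsto_finset_sum _ (fun s _ => hslope (v s))
    have h2 : ∑ s, D (v s) = D (y - z) := by rw [← map_sum, hvsum]
    rw [h2] at h1
    refine h1.congr (fun t => ?_)
    rw [Finset.sum_div]
  have hAle : -A ≤ D (y - z) := by
    refine ge_of_tendsto htend ?_
    filter_upwards [Ioc_mem_nhdsGT (zero_lt_one)] with t ht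
    exact hkey t ht
  -- gradient inequality for convex W
  have hgrad : D (y - z) ≤ W y - W z := by
    refine le_of_tendsto (hslope (y - z)) ?_
    filter_upwards [Ioc_mem_nhdsGT (zero_lt_one)] with t ht
    obtain ⟨ht0, ht1⟩ := ht
    have h := hWconv.2 (Set.mem_univ z) (Set.mem_univ y)
      (by linarith : (0:ℝ) ≤ 1 - t) (le_of_lt ht0) (by ring : (1 - t) + t = 1)
    have hEq : (1 - t) • z + t • y = z + t • (y - z) := by module
    rw [hEq] at h
    rw [smul_eq_mul, smul_eq_mul] at h
    rw [div_le_iff₀ ht0]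
    linarith [h, sub_mul 1 t (W z), one_mul (W z), sub_mul (W y) (W z) t,
      mul_comm t (W y), mul_comm t (W z)]
  have hAeq : A = (∑ s, f s (y s)) - ∑ s, f s (z s) := by
    rw [hA, Finset.sum_sub_distrib]
  linarith
end
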